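/- Let (V, ω) be a symplectic vector space of dimension 2n and β ∈ Λ^k V* with k ≤ n. Then Λβ = 0 if and only if ω^{n−k+1} ∧ β = 0 (i.e. L^{n−k+1} β = 0). -/

import Mathlib

/-!
**Statement 1.** Let `(V, ω)` be a symplectic vector space of dimension `2n` (encoded by a
Darboux basis `f` of `V*`) and `β ∈ Λ^k V*` with `k ≤ n`.  Then `Λβ = 0` if and only if
`ω^{n-k+1} ∧ β = 0` (i.e. `L^{n-k+1} β = 0`), where `L` is the Lefschetz operator of wedging
with ω and `Λ` the dual contraction operator.
-/
set_option linter.unnecessarySimpa false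
set_option linter.unusedSectionVars false
open ExteriorAlgebra

section A1
open CliffordAlgebra

variable {W : Type} [AddCommGroup W] [Module ℝ W]

lemma aux_iota_mul_mem (v : W) {j : ℕ} {x : ExteriorAlgebra ℝ W}
    (hx : x ∈ ⋀[ℝ]^j W) : ι ℝ v * x ∈ ⋀[ℝ]^(j+1) W := by
  have h1 : ι ℝ v ∈ (LinearMap.range (ι ℝ : W →ₗ[ℝ] ExteriorAlgebra ℝ W)) ^ 1 := by
    simpa [pow_one] using LinearMap.mem_range_self _ v
  have := Submodule.mul_mem_mul h1 hx
  rw [← pow_add] at this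
  simpa [Nat.add_comm] using this

lemma aux_contract_mem (φ : Module.Dual ℝ W) {j : ℕ} {x : ExteriorAlgebra ℝ W}
    (hx : x ∈ ⋀[ℝ]^j W) : contractLeft φ x ∈ ⋀[ℝ]^(j-1) W := by
  induction hx using Submodule.pow_induction_on_left' with
  | algebraMap r => simp [contractLeft_algebraMap]
  | add x y i hx hy ihx ihy => rw [map_add]; exact add_mem ihx ihy
  | mem_mul m hm i x hx ih =>
      obtain ⟨v, rfl⟩ := hm
      rw [contractLeft_ι_mul]
      rcases Nat.eq_zero_or_pos i with rfl | hi
      · obtain ⟨r, rfl⟩ := Submodule.mem_one.mp (by simpa using hx)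
        simp only [contractLeft_algebraMap, mul_zero, sub_zero]
        exact Submodule.smul_mem _ _ (by simpa using hx)
      · refine sub_mem (Submodule.smul_mem _ _ ?_) ?_
        · simpa [Nat.succ_sub_one] using hx
        · have := aux_iota_mul_mem v ih
          simpa [Nat.succ_sub_one, show (i-1)+1 = i by omega] using this


variable {W : Type} [AddCommGroup W] [Module ℝ W]

lemma aux_vanish {N : ℕ} (f : Module.Basis (Fin N) ℝ W) {j : ℕ} (hj : N < j)
    {x : ExteriorAlgebra ℝ W} (hx : x ∈ ⋀[ℝ]^j W) : x = 0 := by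
  haveI : Module.Finite ℝ W := Module.Finite.of_basis f
  rw [← ιMulti_span_fixedDegree] at hx
  have hz : ∀ y ∈ Set.range (ιMulti ℝ j (M := W)), y = 0 := by
    rintro y ⟨v, rfl⟩
    refine AlternatingMap.map_linearDependent _ _ ?_
    intro hli
    have := hli.fintype_card_le_finrank
    rw [Module.finrank_eq_card_basis f] at this
    simp at this
    omega
  have : Submodule.span ℝ (Set.range (ιMulti ℝ j (M := W))) ≤ ⊥ := by
    rw [Submodule.span_le]
    intro y hy
    simp [hz y hy]
  simpa using this hx

lemma aux_euler {N : ℕ} (f : Module.Basis (Fin N) ℝ W) {j : ℕ} {x : ExteriorAlgebra ℝ W}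
    (hx : x ∈ ⋀[ℝ]^j W) :
    ∑ p : Fin N, ι ℝ (f p) * contractLeft (f.coord p) x = (j : ℝ) • x := by
  induction hx using Submodule.pow_induction_on_left' with
  | algebraMap r => simp [contractLeft_algebraMap]
  | add x y i hx hy ihx ihy => simp only [map_add, mul_add, Finset.sum_add_distrib, ihx, ihy,
      smul_add]
  | mem_mul m hm i x hx ih =>
      obtain ⟨v, rfl⟩ := hm
      have key : ∀ p : Fin N, ι ℝ (f p) * contractLeft (f.coord p) (ι ℝ v * x)
          = f.coord p v • (ι ℝ (f p) * x) + ι ℝ v * (ι ℝ (f p) * contractLeft (f.coord p) x) := by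
        intro p
        have hswap : ι ℝ (f p) * ι ℝ v = - (ι ℝ v * ι ℝ (f p)) :=
          eq_neg_of_add_eq_zero_left (ι_add_mul_swap (f p) v)
        rw [contractLeft_ι_mul, mul_sub, mul_smul_comm, ← mul_assoc, hswap, neg_mul, mul_assoc,
          sub_neg_eq_add]
      simp only [key, Finset.sum_add_distrib, ← Finset.mul_sum, ih]
      have hsum : ∑ p : Fin N, f.coord p v • (ι ℝ (f p) * x) = ι ℝ v * x := by
        simp only [← smul_mul_assoc]
        rw [← Finset.sum_mul]
        congr 1
        simp only [Module.Basis.coord_apply, ← map_smul]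
        rw [← map_sum, f.sum_repr]
      rw [hsum, mul_smul_comm]
      push_cast
      rw [add_smul, one_smul, add_comm]


end A1

section Aux4
variable {W : Type} [AddCommGroup W] [Module ℝ W]

/-- even index of a Darboux pair -/
def dar0 {n : ℕ} (i : Fin n) : Fin (2*n) := ⟨2*i.1, by have := i.2; omega⟩
/-- odd index of a Darboux pair -/
def dar1 {n : ℕ} (i : Fin n) : Fin (2*n) := ⟨2*i.1+1, by have := i.2; omega⟩

/-- decompose a sum over `Fin (2*n)` into pairs -/
def pairEquiv (n : ℕ) : Fin n × Fin 2 ≃ Fin (2*n) where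
  toFun x := ⟨2*x.1.1 + x.2.1, by have := x.1.2; have := x.2.2; omega⟩
  invFun p := (⟨p.1/2, by have := p.2; omega⟩, ⟨p.1 % 2, by omega⟩)
  left_inv x := by
    ext
    · simp only; omega
    · simp only; omega
  right_inv p := by
    ext
    simp only; omega

lemma aux_sum_pairs {M : Type*} [AddCommMonoid M] (n : ℕ) (g : Fin (2*n) → M) :
    ∑ p, g p = ∑ i : Fin n, (g (dar0 i) + g (dar1 i)) := by
  rw [← Equiv.sum_comp (pairEquiv n) g, Fintype.sum_prod_type]
  refine Finset.sum_congr rfl fun i _ => ?_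
  rw [Fin.sum_univ_two]
  have h0 : pairEquiv n (i, 0) = dar0 i := Fin.ext (by simp [pairEquiv, dar0])
  have h1 : pairEquiv n (i, 1) = dar1 i := Fin.ext (by simp [pairEquiv, dar1])
  rw [h0, h1]

lemma aux_local (φ ψ : Module.Dual ℝ W) (u v : W)
    (hφv : φ v = 0) (hψu : ψ u = 0) (hψv : ψ v = φ u) (β : ExteriorAlgebra ℝ W) :
    CliffordAlgebra.contractLeft ψ (CliffordAlgebra.contractLeft φ (ι ℝ u * (ι ℝ v * β)))
      = ι ℝ u * (ι ℝ v * CliffordAlgebra.contractLeft ψ (CliffordAlgebra.contractLeft φ β))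
        + φ u • (φ u • β) - φ u • (ι ℝ v * CliffordAlgebra.contractLeft ψ β)
        - φ u • (ι ℝ u * CliffordAlgebra.contractLeft φ β) := by
  simp only [CliffordAlgebra.contractLeft_ι_mul, hφv, hψu, hψv, map_sub, map_smul, mul_sub,
    mul_smul_comm, zero_smul, smul_sub, sub_zero, zero_sub, smul_zero, map_neg, mul_neg,
    neg_neg, neg_sub]
  abel

lemma aux_comm {n : ℕ} (f : Module.Basis (Fin (2*n)) ℝ W) (β : ExteriorAlgebra ℝ W) :
    (∑ i : Fin n, (CliffordAlgebra.contractLeft (f.coord (dar1 i))).comp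
        (CliffordAlgebra.contractLeft (f.coord (dar0 i))))
      ((∑ i : Fin n, ι ℝ (f (dar0 i)) * ι ℝ (f (dar1 i))) * β)
    = (∑ i : Fin n, ι ℝ (f (dar0 i)) * ι ℝ (f (dar1 i))) *
        ((∑ i : Fin n, (CliffordAlgebra.contractLeft (f.coord (dar1 i))).comp
          (CliffordAlgebra.contractLeft (f.coord (dar0 i)))) β)
      + (n:ℝ) • β - ∑ p : Fin (2*n), ι ℝ (f p) * CliffordAlgebra.contractLeft (f.coord p) β := by
  have coordval : ∀ p q : Fin (2*n), f.coord p (f q) = if q = p then 1 else 0 := by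
    intro p q
    simp [Module.Basis.coord_apply, Module.Basis.repr_self, Finsupp.single_apply]
  have one : ∀ i : Fin n,
      ((CliffordAlgebra.contractLeft (f.coord (dar1 i))).comp
        (CliffordAlgebra.contractLeft (f.coord (dar0 i))))
        ((∑ j : Fin n, ι ℝ (f (dar0 j)) * ι ℝ (f (dar1 j))) * β)
      = (∑ j : Fin n, ι ℝ (f (dar0 j)) * ι ℝ (f (dar1 j))) *
          (((CliffordAlgebra.contractLeft (f.coord (dar1 i))).comp
            (CliffordAlgebra.contractLeft (f.coord (dar0 i)))) β)
        + β
        - ι ℝ (f (dar1 i)) * CliffordAlgebra.contractLeft (f.coord (dar1 i)) β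
        - ι ℝ (f (dar0 i)) * CliffordAlgebra.contractLeft (f.coord (dar0 i)) β := by
    intro i
    rw [Finset.sum_mul, LinearMap.comp_apply, map_sum, map_sum]
    have term : ∀ j : Fin n,
        CliffordAlgebra.contractLeft (f.coord (dar1 i))
          (CliffordAlgebra.contractLeft (f.coord (dar0 i))
            ((ι ℝ (f (dar0 j)) * ι ℝ (f (dar1 j))) * β))
        = ι ℝ (f (dar0 j)) * (ι ℝ (f (dar1 j)) *
            (((CliffordAlgebra.contractLeft (f.coord (dar1 i))).comp
              (CliffordAlgebra.contractLeft (f.coord (dar0 i)))) β))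
          + (if j = i then
              β - ι ℝ (f (dar1 i)) * CliffordAlgebra.contractLeft (f.coord (dar1 i)) β
                - ι ℝ (f (dar0 i)) * CliffordAlgebra.contractLeft (f.coord (dar0 i)) β
             else 0) := by
      intro j
      have e00 : (dar0 j = dar0 i) ↔ (j = i) := by
        simp only [dar0, Fin.ext_iff]; omega
      have e11 : (dar1 j = dar1 i) ↔ (j = i) := by
        simp only [dar1, Fin.ext_iff]; omega
      have e10 : ¬ (dar1 j = dar0 i) := by simp only [dar0, dar1, Fin.ext_iff]; omega
      have e01 : ¬ (dar0 j = dar1 i) := by simp only [dar0, dar1, Fin.ext_iff]; omega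
      rw [mul_assoc]
      rw [aux_local (f.coord (dar0 i)) (f.coord (dar1 i)) (f (dar0 j)) (f (dar1 j))
        (by rw [coordval]; simp [e10])
        (by rw [coordval]; simp [e01])
        (by rw [coordval, coordval]; simp [e00, e11]) β]
      rw [coordval]
      by_cases h : j = i
      · subst h
        rw [if_pos (e00.mpr rfl), if_pos rfl]
        simp only [one_smul, LinearMap.comp_apply]
        abel
      · simp only [if_neg (fun hc => h (e00.mp hc)), if_neg h, zero_smul, smul_zero, add_zero,
          sub_zero, LinearMap.comp_apply]
    simp only [term]
    rw [Finset.sum_add_distrib, Finset.sum_ite_eq' Finset.univ i]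
    simp only [Finset.mem_univ, if_pos, mul_assoc, ← Finset.sum_mul]
    rw [Finset.sum_mul]
    simp only [mul_assoc]
    abel
  rw [LinearMap.sum_apply, LinearMap.sum_apply]
  simp only [one]
  rw [Finset.sum_sub_distrib, Finset.sum_sub_distrib, Finset.sum_add_distrib,
    ← Finset.mul_sum, Finset.sum_const, Finset.card_univ, Fintype.card_fin,
    aux_sum_pairs n (fun p => ι ℝ (f p) * CliffordAlgebra.contractLeft (f.coord p) β),
    Finset.sum_add_distrib, ← Nat.cast_smul_eq_nsmul ℝ]
  abel
end Aux4

open ExteriorAlgebra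
section Main
variable {W : Type} [AddCommGroup W] [Module ℝ W] {n : ℕ} (f : Module.Basis (Fin (2*n)) ℝ W)
  (ω : ExteriorAlgebra ℝ W) (Λop : ExteriorAlgebra ℝ W →ₗ[ℝ] ExteriorAlgebra ℝ W)

variable
  (hω : ω = ∑ i : Fin n, ι ℝ (f (dar0 i)) * ι ℝ (f (dar1 i)))
  (hΛ : Λop = ∑ i : Fin n, (CliffordAlgebra.contractLeft (f.coord (dar1 i))).comp
      (CliffordAlgebra.contractLeft (f.coord (dar0 i))))

include f hω hΛ

lemma aux_omega_mem : ω ∈ ⋀[ℝ]^2 W := by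
  rw [hω]
  refine Submodule.sum_mem _ fun i _ => ?_
  show _ ∈ LinearMap.range (ι ℝ : W →ₗ[ℝ] ExteriorAlgebra ℝ W) ^ 2
  rw [pow_two]
  exact Submodule.mul_mem_mul (LinearMap.mem_range_self _ _) (LinearMap.mem_range_self _ _)

lemma aux_omega_mul_mem {j : ℕ} {x : ExteriorAlgebra ℝ W} (hx : x ∈ ⋀[ℝ]^j W) :
    ω * x ∈ ⋀[ℝ]^(j+2) W := by
  have := Submodule.mul_mem_mul (aux_omega_mem f ω Λop hω hΛ) hx
  rw [← pow_add] at this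
  simpa [Nat.add_comm] using this

lemma aux_omega_pow_mul_mem (m : ℕ) {j : ℕ} {x : ExteriorAlgebra ℝ W} (hx : x ∈ ⋀[ℝ]^j W) :
    ω ^ m * x ∈ ⋀[ℝ]^(2*m+j) W := by
  induction m with
  | zero => simpa using hx
  | succ m ih =>
      have h2 : ω ^ (m+1) * x = ω * (ω ^ m * x) := by
        rw [pow_succ', mul_assoc]
      rw [h2]
      have := aux_omega_mul_mem f ω Λop hω hΛ ih
      have he : 2*m+j+2 = 2*(m+1)+j := by omega
      rwa [he] at this

lemma aux_Lambda_mem {j : ℕ} {x : ExteriorAlgebra ℝ W} (hx : x ∈ ⋀[ℝ]^j W) :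
    Λop x ∈ ⋀[ℝ]^(j-2) W := by
  rw [hΛ, LinearMap.sum_apply]
  refine Submodule.sum_mem _ fun i _ => ?_
  have := aux_contract_mem (f.coord (dar1 i)) (aux_contract_mem (f.coord (dar0 i)) hx)
  simpa [show j - 1 - 1 = j - 2 by omega] using this

lemma aux_Lambda_low {j : ℕ} (hj : j ≤ 1) {x : ExteriorAlgebra ℝ W} (hx : x ∈ ⋀[ℝ]^j W) :
    Λop x = 0 := by
  rw [hΛ, LinearMap.sum_apply]
  refine Finset.sum_eq_zero fun i _ => ?_
  interval_cases j
  · obtain ⟨r, rfl⟩ := Submodule.mem_one.mp (by simpa using hx)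
    simp [CliffordAlgebra.contractLeft_algebraMap]
  · obtain ⟨v, rfl⟩ : x ∈ LinearMap.range (ι ℝ : W →ₗ[ℝ] ExteriorAlgebra ℝ W) := by
      simpa using hx
    simp [CliffordAlgebra.contractLeft_ι, CliffordAlgebra.contractLeft_algebraMap]

lemma aux_star {j : ℕ} {x : ExteriorAlgebra ℝ W} (hx : x ∈ ⋀[ℝ]^j W) :
    Λop (ω * x) = ω * Λop x + ((n:ℝ) - j) • x := by
  rw [hω, hΛ, aux_comm f x, aux_euler f hx, sub_smul]
  abel

lemma aux_pow (m : ℕ) {j : ℕ} {x : ExteriorAlgebra ℝ W} (hx : x ∈ ⋀[ℝ]^j W) :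
    Λop (ω ^ m * x) = ω ^ m * Λop x
      + ((m:ℝ) * ((n:ℝ) - j - m + 1)) • (ω ^ (m-1) * x) := by
  induction m generalizing j x with
  | zero => simp
  | succ m ih =>
      have h2 : ω ^ (m+1) * x = ω ^ m * (ω * x) := by rw [pow_succ, mul_assoc]
      rw [h2, ih (aux_omega_mul_mem f ω Λop hω hΛ hx), aux_star f ω Λop hω hΛ hx]
      rw [mul_add, mul_smul_comm, ← mul_assoc, ← pow_succ]
      rcases Nat.eq_zero_or_pos m with rfl | hm
      · simp only [Nat.cast_zero, zero_mul, zero_smul, add_zero, Nat.add_sub_cancel, pow_zero,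
          one_mul]
        congr 1
        push_cast
        ring
      · have hm1 : m - 1 + 1 = m := by omega
        have h3 : ω ^ (m-1) * (ω * x) = ω ^ m * x := by
          rw [← mul_assoc, ← pow_succ, hm1]
        rw [h3, Nat.add_sub_cancel, add_assoc, ← add_smul]
        congr 1
        push_cast
        ring

lemma aux_descent (M : ℕ) {j : ℕ} {x : ExteriorAlgebra ℝ W} (hx : x ∈ ⋀[ℝ]^j W)
    (hprim : Λop x = 0) (hM : ω ^ M * x = 0)
    (hc : ∀ m : ℕ, 1 ≤ m → m ≤ M → (n:ℝ) - j - m + 1 ≠ 0) : x = 0 := by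
  induction M with
  | zero => simpa using hM
  | succ M ih =>
      refine ih ?_ (fun m h1 h2 => hc m h1 (by omega))
      have h := aux_pow f ω Λop hω hΛ (M+1) hx
      rw [hM, hprim, mul_zero, zero_add, map_zero] at h
      have hcoef : ((M+1:ℕ):ℝ) * ((n:ℝ) - j - ((M+1:ℕ):ℝ) + 1) ≠ 0 :=
        mul_ne_zero (Nat.cast_ne_zero.mpr (Nat.succ_ne_zero M)) (hc (M+1) (by omega) le_rfl)
      have h2 := (smul_eq_zero.mp h.symm).resolve_left hcoef
      simpa [Nat.add_sub_cancel] using h2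

lemma aux_inj : ∀ j, j ≤ n → ∀ x : ExteriorAlgebra ℝ W, x ∈ ⋀[ℝ]^j W →
    ω ^ (n - j) * x = 0 → x = 0 := by
  intro j
  induction j using Nat.strong_induction_on with
  | _ j IH =>
  intro hj x hx h0
  have hcoef : ∀ m : ℕ, 1 ≤ m → m ≤ n - j → (n:ℝ) - j - m + 1 ≠ 0 := by
    intro m h1 h2
    have hmn : m + j ≤ n := by omega
    have hm : (m:ℝ) + j ≤ (n:ℝ) := by exact_mod_cast hmn
    have h1' : (1:ℝ) ≤ m := by exact_mod_cast h1
    linarith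
  by_cases hj1 : j ≤ 1
  · exact aux_descent f ω Λop hω hΛ (n-j) hx (aux_Lambda_low f ω Λop hω hΛ hj1 hx) h0 hcoef
  · by_cases hjn : j = n
    · subst hjn
      simpa [Nat.sub_self] using h0
    · have hjn' : j < n := by omega
      have hmem := aux_Lambda_mem f ω Λop hω hΛ hx
      have hp := aux_pow f ω Λop hω hΛ (n-j) hx
      rw [h0, map_zero] at hp
      have e1 : ω ^ (n-j) * Λop x
          = - ((((n-j:ℕ):ℝ) * ((n:ℝ) - j - ((n-j:ℕ):ℝ) + 1)) • (ω ^ (n-j-1) * x)) :=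
        eq_neg_of_add_eq_zero_left hp.symm
      have e3 : ω * (ω ^ (n-j-1) * x) = ω ^ (n-j) * x := by
        rw [← mul_assoc, ← pow_succ', show n-j-1+1 = n-j by omega]
      have e2 : ω * (ω ^ (n-j) * Λop x) = 0 := by
        rw [e1, mul_neg, mul_smul_comm, e3, h0, smul_zero, neg_zero]
      rw [← mul_assoc, ← pow_succ'] at e2
      have e4 : ω ^ (n-(j-2)) * Λop x = 0 := by
        rw [show n-(j-2) = (n-j+1)+1 by omega, pow_succ', mul_assoc, e2, mul_zero]
      have hΛx : Λop x = 0 := IH (j-2) (by omega) (by omega) (Λop x) hmem e4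
      exact aux_descent f ω Λop hω hΛ (n-j) hx hΛx h0 hcoef

lemma main_dar (k : ℕ) (hk : k ≤ n) (β : ExteriorAlgebra ℝ W) (hβ : β ∈ ⋀[ℝ]^k W) :
    Λop β = 0 ↔ ω ^ (n - k + 1) * β = 0 := by
  have hcoef0 : (((n-k+1:ℕ)):ℝ) * ((n:ℝ) - k - ((n-k+1:ℕ):ℝ) + 1) = 0 := by
    have hc : ((n-k+1:ℕ):ℝ) = (n:ℝ) - k + 1 := by
      push_cast [Nat.cast_sub hk]
      ring
    rw [hc]
    ring
  constructor
  · intro h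
    have hγ : ω ^ (n-k+1) * β ∈ ⋀[ℝ]^(2*(n-k+1)+k) W :=
      aux_omega_pow_mul_mem f ω Λop hω hΛ (n-k+1) hβ
    have hpow := aux_pow f ω Λop hω hΛ (n-k+1) hβ
    rw [h, mul_zero, zero_add, hcoef0, zero_smul] at hpow
    have hvan : ω ^ k * (ω ^ (n-k+1) * β) = 0 :=
      aux_vanish f (by omega) (aux_omega_pow_mul_mem f ω Λop hω hΛ k hγ)
    refine aux_descent f ω Λop hω hΛ k hγ hpow hvan ?_
    intro m h1 h2
    have hkn : (k:ℝ) ≤ n := by exact_mod_cast hk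
    have hdeg : ((2*(n-k+1)+k:ℕ):ℝ) = 2*(n:ℝ) - k + 2 := by
      push_cast [Nat.cast_sub hk]
      ring
    rw [hdeg]
    have hm : (1:ℝ) ≤ m := by exact_mod_cast h1
    linarith
  · intro h
    by_cases hk1 : k ≤ 1
    · exact aux_Lambda_low f ω Λop hω hΛ hk1 hβ
    · have hmem := aux_Lambda_mem f ω Λop hω hΛ hβ
      have hpow := aux_pow f ω Λop hω hΛ (n-k+1) hβ
      rw [h, map_zero, hcoef0, zero_smul, add_zero] at hpow
      have e4 : ω ^ (n-(k-2)) * Λop β = 0 := by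
        rw [show n-(k-2) = (n-k+1)+1 by omega, pow_succ', mul_assoc, ← hpow, mul_zero]
      exact aux_inj f ω Λop hω hΛ (k-2) (by omega) (Λop β) hmem e4
end Main

theorem primitive_iff_lefschetz_power_vanishes
    (n k : ℕ) (hk : k ≤ n) (V : Type) [AddCommGroup V] [Module ℝ V]
    (f : Module.Basis (Fin (2 * n)) ℝ (Module.Dual ℝ V))
    (ω : ExteriorAlgebra ℝ (Module.Dual ℝ V))
    (hω : ω = ∑ i : Fin n,
      ExteriorAlgebra.ι ℝ (f ⟨2 * i.1, by have := i.2; omega⟩) *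
      ExteriorAlgebra.ι ℝ (f ⟨2 * i.1 + 1, by have := i.2; omega⟩))
    (Λop : ExteriorAlgebra ℝ (Module.Dual ℝ V) →ₗ[ℝ] ExteriorAlgebra ℝ (Module.Dual ℝ V))
    (hΛ : Λop = ∑ i : Fin n,
      (CliffordAlgebra.contractLeft (f.coord ⟨2 * i.1 + 1, by have := i.2; omega⟩)).comp
        (CliffordAlgebra.contractLeft (f.coord ⟨2 * i.1, by have := i.2; omega⟩)))
    (β : ExteriorAlgebra ℝ (Module.Dual ℝ V)) (hβ : β ∈ ⋀[ℝ]^k (Module.Dual ℝ V)) :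
    Λop β = 0 ↔ ω ^ (n - k + 1) * β = 0 := by
  have hω' : ω = ∑ i : Fin n, ι ℝ (f (dar0 i)) * ι ℝ (f (dar1 i)) := hω
  have hΛ' : Λop = ∑ i : Fin n, (CliffordAlgebra.contractLeft (f.coord (dar1 i))).comp
      (CliffordAlgebra.contractLeft (f.coord (dar0 i))) := hΛ
  exact main_dar f ω Λop hω' hΛ' k hk β hβ
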